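/- For every i, define S_i = Σ_{k=1}^N Q^x(k,i) and x̃_i = (Σ_{k=1}^N (Q^x(k,i) + Q^y(k,i))·x_k) / (S_i + 1) (note S_i + 1 > 0 since all entries of Q^x are positive, and Σ_{k=1}^N Q^y(k,i) = 1 by construction). Then the gradient of L with respect to y_i equals ∇_{y_i}L = −(2/(N·τ))·[ 2(x_i − y_i) − (S_i + 1)·(x̃_i − y_i) ]: it decomposes into an attractive force toward x_i and a repulsive force away from the weighted mean x̃_i of the other modality, whose strength S_i + 1 is the column sum of Q^x plus one. -/

import Mathlib

/-!
STATEMENT 16: With `S_i = Σ_k Q^x(k,i)` and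
`x̃_i = (Σ_k (Q^x(k,i) + Q^y(k,i)) • x_k) / (S_i + 1)`, the gradient of the contrastive
loss with respect to `y_i` equals
`∇_{y_i}L = −(2/(N·τ)) • [2(x_i − y_i) − (S_i + 1) • (x̃_i − y_i)]`.
-/

open RealInnerProductSpace

/-- Softmax assignment matrix `Q^x(i,j)` (rows sum to one). -/
noncomputable def Qx {d N : ℕ} (τ : ℝ) (x y : Fin N → EuclideanSpace ℝ (Fin d))
    (i j : Fin N) : ℝ :=
  Real.exp (-‖x i - y j‖ ^ 2 / τ) / ∑ j', Real.exp (-‖x i - y j'‖ ^ 2 / τ)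

/-- Softmax assignment matrix `Q^y(i,j)` (columns sum to one). -/
noncomputable def Qy {d N : ℕ} (τ : ℝ) (x y : Fin N → EuclideanSpace ℝ (Fin d))
    (i j : Fin N) : ℝ :=
  Real.exp (-‖x i - y j‖ ^ 2 / τ) / ∑ i', Real.exp (-‖x i' - y j‖ ^ 2 / τ)

/-- The multimodal contrastive loss
`L = −(1/N) Σ_i (log Q^x(i,i) + log Q^y(i,i))`. -/
noncomputable def contrastiveLoss {d N : ℕ} (τ : ℝ)
    (x y : Fin N → EuclideanSpace ℝ (Fin d)) : ℝ :=
  -(1 / (N : ℝ)) * ∑ i, (Real.log (Qx τ x y i i) + Real.log (Qy τ x y i i))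

section Helpers

open InnerProductSpace

variable {E : Type*} [NormedAddCommGroup E] [InnerProductSpace ℝ E] [CompleteSpace E]

lemma hg_add {f g : E → ℝ} {a b x : E} (hf : HasGradientAt f a x) (hg : HasGradientAt g b x) :
    HasGradientAt (fun z => f z + g z) (a + b) x := by
  rw [hasGradientAt_iff_hasFDerivAt] at *
  simpa [Pi.add_def] using hf.add hg

lemma hg_sub {f g : E → ℝ} {a b x : E} (hf : HasGradientAt f a x) (hg : HasGradientAt g b x) :
    HasGradientAt (fun z => f z - g z) (a - b) x := by
  rw [hasGradientAt_iff_hasFDerivAt] at *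
  simpa [Pi.sub_def] using hf.sub hg

lemma hg_const_mul (c : ℝ) {f : E → ℝ} {a x : E} (hf : HasGradientAt f a x) :
    HasGradientAt (fun z => c * f z) (c • a) x := by
  rw [hasGradientAt_iff_hasFDerivAt] at *
  simpa using hf.const_mul c

lemma hg_add_const {f : E → ℝ} {a x : E} (hf : HasGradientAt f a x) (c : ℝ) :
    HasGradientAt (fun z => f z + c) a x := by
  rw [hasGradientAt_iff_hasFDerivAt] at *
  simpa using hf.add_const c

lemma hg_const (x : E) (c : ℝ) : HasGradientAt (fun _ : E => c) (0 : E) x := by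
  rw [hasGradientAt_iff_hasFDerivAt]
  simpa using hasFDerivAt_const c x

lemma hg_sum {ι : Type*} (s : Finset ι) {f : ι → E → ℝ} {a : ι → E} {x : E}
    (hf : ∀ k ∈ s, HasGradientAt (f k) (a k) x) :
    HasGradientAt (fun z => ∑ k ∈ s, f k z) (∑ k ∈ s, a k) x := by
  rw [hasGradientAt_iff_hasFDerivAt]
  simpa [Finset.sum_fn] using HasFDerivAt.sum (fun k hk => (hf k hk))

lemma hg_comp_real {f : E → ℝ} {a x : E} (hf : HasGradientAt f a x)
    {g : ℝ → ℝ} {g' : ℝ} (hg : HasDerivAt g g' (f x)) :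
    HasGradientAt (fun z => g (f z)) (g' • a) x := by
  rw [hasGradientAt_iff_hasFDerivAt] at *
  simpa [Function.comp_def] using hg.comp_hasFDerivAt x hf

lemma hg_normsq (c x : E) : HasGradientAt (fun z : E => ‖c - z‖ ^ 2) ((2:ℝ) • (x - c)) x := by
  have h : HasFDerivAt (fun z : E => c - z) (-(ContinuousLinearMap.id ℝ E)) x :=
    (hasFDerivAt_id x).const_sub c
  have h2 := h.norm_sq
  rw [hasGradientAt_iff_hasFDerivAt]
  convert h2 using 1
  ext w
  simp [real_inner_smul_left, inner_sub_left, inner_sub_right, real_inner_comm]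
  ext w
  simp [real_inner_smul_left, inner_sub_left, inner_sub_right, real_inner_comm]

lemma hg_neg_normsq_div (c x : E) (τ : ℝ) :
    HasGradientAt (fun z : E => -‖c - z‖ ^ 2 / τ) ((2 / τ) • (c - x)) x := by
  have h := hg_const_mul (-τ⁻¹) (hg_normsq c x)
  have e : (fun z : E => -τ⁻¹ * ‖c - z‖ ^ 2) = fun z : E => -‖c - z‖ ^ 2 / τ := by
    funext z; ring
  rw [e] at h
  convert h using 1
  match_scalars <;> ring

lemma hg_exp_normsq (c x : E) (τ : ℝ) :
    HasGradientAt (fun z : E => Real.exp (-‖c - z‖ ^ 2 / τ))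
      ((Real.exp (-‖c - x‖ ^ 2 / τ) * (2 / τ)) • (c - x)) x := by
  have h := hg_comp_real (hg_neg_normsq_div c x τ) (Real.hasDerivAt_exp _)
  convert h using 1
  rw [smul_smul]

end Helpers

theorem gradient_attraction_repulsion_decomposition
    (d N : ℕ) (hd : 0 < d) (hN : 0 < N) (τ : ℝ) (hτ : 0 < τ)
    (x y : Fin N → EuclideanSpace ℝ (Fin d)) (i : Fin N)
    (S : ℝ) (hS : S = ∑ k, Qx τ x y k i)
    (xt : EuclideanSpace ℝ (Fin d))
    (hxt : xt = (S + 1)⁻¹ • ∑ k, (Qx τ x y k i + Qy τ x y k i) • x k) :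
    HasGradientAt (fun z => contrastiveLoss τ x (Function.update y i z))
      ((-(2 / ((N : ℝ) * τ))) • ((2 : ℝ) • (x i - y i) - (S + 1) • (xt - y i)))
      (y i) := by
  classical
  have hNe : Nonempty (Fin N) := ⟨⟨0, hN⟩⟩
  set C : Fin N → ℝ := fun k => ∑ j ∈ Finset.univ \ {i}, Real.exp (-‖x k - y j‖ ^ 2 / τ)
    with hC
  have hA : ∀ k, Real.exp (-‖x k - y i‖ ^ 2 / τ) + C k
      = ∑ j, Real.exp (-‖x k - y j‖ ^ 2 / τ) := by
    intro k
    rw [Finset.sum_eq_sum_sdiff_singleton_add (Finset.mem_univ i)]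
    ring
  have hApos : ∀ (k : Fin N) (w : EuclideanSpace ℝ (Fin d)),
      0 < Real.exp (-‖x k - w‖ ^ 2 / τ) + C k := by
    intro k w
    have : 0 ≤ C k := Finset.sum_nonneg fun j _ => (Real.exp_pos _).le
    linarith [Real.exp_pos (-‖x k - w‖ ^ 2 / τ)]
  have hBpos : ∀ w : EuclideanSpace ℝ (Fin d), 0 < ∑ m, Real.exp (-‖x m - w‖ ^ 2 / τ) :=
    fun w => Finset.sum_pos (fun m _ => Real.exp_pos _) Finset.univ_nonempty
  -- Step 1: rewrite the loss
  have hfun : (fun z : EuclideanSpace ℝ (Fin d) => contrastiveLoss τ x (Function.update y i z))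
      = fun z : EuclideanSpace ℝ (Fin d) => -(1 / (N : ℝ)) * ∑ k,
          ((-‖x k - Function.update y i z k‖ ^ 2 / τ
              - Real.log (Real.exp (-‖x k - z‖ ^ 2 / τ) + C k))
            + (-‖x k - Function.update y i z k‖ ^ 2 / τ
              - Real.log (∑ m, Real.exp (-‖x m - Function.update y i z k‖ ^ 2 / τ)))) := by
    funext z
    unfold contrastiveLoss Qx Qy
    congr 1
    apply Finset.sum_congr rfl
    intro k _
    have hsplit : ∑ j, Real.exp (-‖x k - Function.update y i z j‖ ^ 2 / τ)
        = Real.exp (-‖x k - z‖ ^ 2 / τ) + C k := by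
      have hupd : (fun j => Real.exp (-‖x k - Function.update y i z j‖ ^ 2 / τ))
          = Function.update (fun j => Real.exp (-‖x k - y j‖ ^ 2 / τ)) i
              (Real.exp (-‖x k - z‖ ^ 2 / τ)) := by
        funext j
        rcases eq_or_ne j i with rfl | hj
        · simp
        · simp [Function.update_of_ne hj]
      rw [hupd]
      exact Finset.sum_update_of_mem (Finset.mem_univ i)
        (fun j => Real.exp (-‖x k - y j‖ ^ 2 / τ)) (Real.exp (-‖x k - z‖ ^ 2 / τ))
    rw [hsplit, Real.log_div (Real.exp_pos _).ne' (hApos k z).ne',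
      Real.log_div (Real.exp_pos _).ne' (hBpos _).ne', Real.log_exp]
  rw [hfun]
  -- Step 2: per-term gradients
  set ga : Fin N → EuclideanSpace ℝ (Fin d) := fun k =>
    (if k = i then ((2 / τ) • (x i - y i)) else 0)
      - ((2 / τ) * Qx τ x y k i) • (x k - y i) with hga
  set gb : Fin N → EuclideanSpace ℝ (Fin d) := fun k =>
    if k = i then ((2 / τ) • (x i - y i)
      - ∑ m, ((2 / τ) * Qy τ x y m i) • (x m - y i)) else 0 with hgb
  have hQxval : ∀ k, (Real.exp (-‖x k - y i‖ ^ 2 / τ) + C k)⁻¹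
      * (Real.exp (-‖x k - y i‖ ^ 2 / τ) * (2 / τ)) = (2 / τ) * Qx τ x y k i := by
    intro k
    rw [hA k]
    unfold Qx
    rw [div_eq_mul_inv]
    ring
  have hlogA : ∀ k, HasGradientAt
      (fun z : EuclideanSpace ℝ (Fin d) => Real.log (Real.exp (-‖x k - z‖ ^ 2 / τ) + C k))
      (((2 / τ) * Qx τ x y k i) • (x k - y i)) (y i) := by
    intro k
    have h1 := hg_add_const (hg_exp_normsq (x k) (y i) τ) (C k)
    have h2 := hg_comp_real h1 (Real.hasDerivAt_log (hApos k (y i)).ne')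
    rw [smul_smul, hQxval k] at h2
    exact h2
  have hlogB : HasGradientAt
      (fun z : EuclideanSpace ℝ (Fin d) => Real.log (∑ m, Real.exp (-‖x m - z‖ ^ 2 / τ)))
      (∑ m, ((2 / τ) * Qy τ x y m i) • (x m - y i)) (y i) := by
    have h1 := hg_sum Finset.univ (fun m _ => hg_exp_normsq (x m) (y i) τ)
    have h2 := hg_comp_real h1 (Real.hasDerivAt_log (hBpos (y i)).ne')
    rw [Finset.smul_sum] at h2
    convert h2 using 2 with m
    rw [smul_smul]
    congr 1
    unfold Qy
    rw [div_eq_mul_inv]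
    ring
  have hgk : ∀ k ∈ Finset.univ, HasGradientAt
      (fun z : EuclideanSpace ℝ (Fin d) =>
        (-‖x k - Function.update y i z k‖ ^ 2 / τ
            - Real.log (Real.exp (-‖x k - z‖ ^ 2 / τ) + C k))
          + (-‖x k - Function.update y i z k‖ ^ 2 / τ
            - Real.log (∑ m, Real.exp (-‖x m - Function.update y i z k‖ ^ 2 / τ))))
      (ga k + gb k) (y i) := by
    intro k _
    rcases eq_or_ne k i with rfl | hk
    · simp only [Function.update_self, hga, hgb, if_pos rfl]
      exact hg_add (hg_sub (hg_neg_normsq_div (x k) (y k) τ) (hlogA k))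
        (hg_sub (hg_neg_normsq_div (x k) (y k) τ) hlogB)
    · simp only [Function.update_of_ne hk, hga, hgb, if_neg hk]
      have h1 := hg_sub (hg_const (y i) (-‖x k - y k‖ ^ 2 / τ)) (hlogA k)
      have h2 := hg_const (y i)
        (-‖x k - y k‖ ^ 2 / τ - Real.log (∑ m, Real.exp (-‖x m - y k‖ ^ 2 / τ)))
      have := hg_add h1 h2
      simpa using this
  have htotal := hg_const_mul (-(1 / (N : ℝ))) (hg_sum Finset.univ hgk)
  -- Step 3: identify the gradient vector
  convert htotal using 1
  have hQy1 : ∑ k, Qy τ x y k i = 1 := by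
    unfold Qy
    rw [← Finset.sum_div]
    exact div_self (hBpos (y i)).ne'
  have hS1 : S + 1 = ∑ k, (Qx τ x y k i + Qy τ x y k i) := by
    rw [Finset.sum_add_distrib, ← hS, hQy1]
  have hSpos : 0 < S + 1 := by
    have : 0 ≤ S := by
      rw [hS]
      exact Finset.sum_nonneg fun k _ => div_nonneg (Real.exp_pos _).le
        (Finset.sum_nonneg fun j _ => (Real.exp_pos _).le)
    linarith
  have key : (S + 1) • (xt - y i)
      = ∑ k, (Qx τ x y k i + Qy τ x y k i) • (x k - y i) := by
    rw [smul_sub, hxt, smul_inv_smul₀ hSpos.ne']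
    rw [hS1, Finset.sum_smul, ← Finset.sum_sub_distrib]
    exact Finset.sum_congr rfl fun k _ => (smul_sub _ _ _).symm
  rw [key]
  have hsum_ga : ∑ k, ga k
      = (2 / τ) • (x i - y i) - (2 / τ) • ∑ k, Qx τ x y k i • (x k - y i) := by
    rw [hga]
    rw [Finset.sum_sub_distrib]
    congr 1
    · simp
    · rw [Finset.smul_sum]
      exact Finset.sum_congr rfl fun k _ => mul_smul _ _ _
  have hsum_gb : ∑ k, gb k
      = (2 / τ) • (x i - y i) - (2 / τ) • ∑ m, Qy τ x y m i • (x m - y i) := by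
    rw [hgb]
    rw [Finset.sum_ite_eq' Finset.univ i]
    simp only [Finset.mem_univ, if_pos]
    congr 1
    rw [Finset.smul_sum]
    exact Finset.sum_congr rfl fun m _ => mul_smul _ _ _
  rw [Finset.sum_add_distrib, hsum_ga, hsum_gb]
  have hexpand : ∑ k, (Qx τ x y k i + Qy τ x y k i) • (x k - y i)
      = (∑ k, Qx τ x y k i • (x k - y i)) + ∑ k, Qy τ x y k i • (x k - y i) := by
    rw [← Finset.sum_add_distrib]
    exact Finset.sum_congr rfl fun k _ => add_smul _ _ _
  rw [hexpand]
  set a := x i - y i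
  set P := ∑ k, Qx τ x y k i • (x k - y i)
  set Q := ∑ k, Qy τ x y k i • (x k - y i)
  match_scalars <;> ring
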